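/- arXiv:1107.0336 — 6 statements merged into one kernel-verified Lean document; each statement's English description precedes it below -/
import Mathlib

section
/- Let K be a field of characteristic different from 2 and A a finite-dimensional commutative K-algebra. Then μ^sym(A/K) ≤ 2·μ(A/K). -/
open Finset

/-- The bilinear complexity of a `K`-algebra `A`. -/
noncomputable def mu (K A : Type*) [Field K] [NonUnitalNonAssocRing A] [Module K A] : ℕ :=
  sInf {n : ℕ | ∃ (φ ψ : Fin n → (A →ₗ[K] K)) (w : Fin n → A),
    ∀ x y : A, x * y = ∑ i, (φ i x * ψ i y) • w i}

/-- The symmetric bilinear complexity of a `K`-algebra `A`. -/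
noncomputable def muSym (K A : Type*) [Field K] [NonUnitalNonAssocRing A] [Module K A] : ℕ :=
  sInf {n : ℕ | ∃ (φ : Fin n → (A →ₗ[K] K)) (w : Fin n → A),
    ∀ x y : A, x * y = ∑ i, (φ i x * φ i y) • w i}

/-- If `char K ≠ 2` and `A` is a finite-dimensional commutative `K`-algebra,
then `μ^sym(A/K) ≤ 2 μ(A/K)`. -/
theorem stmt_1 (K : Type*) [Field K] (h2 : ringChar K ≠ 2)
    (A : Type*) [CommRing A] [Algebra K A] [FiniteDimensional K A] :
    muSym K A ≤ 2 * mu K A := by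
  rw [mu, muSym]
  by_cases hne : {n : ℕ | ∃ (φ ψ : Fin n → (A →ₗ[K] K)) (w : Fin n → A),
      ∀ x y : A, x * y = ∑ i, (φ i x * ψ i y) • w i}.Nonempty
  · set n := sInf {n : ℕ | ∃ (φ ψ : Fin n → (A →ₗ[K] K)) (w : Fin n → A),
      ∀ x y : A, x * y = ∑ i, (φ i x * ψ i y) • w i} with hn
    obtain ⟨φ, ψ, w, hw⟩ := Nat.sInf_mem hne
    have h2' : (2 : K) ≠ 0 := Ring.two_ne_zero h2
    have h4 : (4 : K) ≠ 0 := by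
      have : (4 : K) = 2 * 2 := by norm_num
      rw [this]; exact mul_ne_zero h2' h2'
    have hmem : (n + n) ∈ {m : ℕ | ∃ (Φ : Fin m → (A →ₗ[K] K)) (v : Fin m → A),
        ∀ x y : A, x * y = ∑ i, (Φ i x * Φ i y) • v i} := by
      refine ⟨Fin.append (fun i => φ i + ψ i) (fun i => φ i - ψ i),
        Fin.append (fun i => (4 : K)⁻¹ • w i) (fun i => (-(4 : K)⁻¹) • w i), ?_⟩
      intro x y
      rw [Fin.sum_univ_add]
      simp only [Fin.append_left, Fin.append_right, LinearMap.add_apply, LinearMap.sub_apply]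
      have key : ∀ i : Fin n,
          ((φ i x + ψ i x) * (φ i y + ψ i y)) • ((4 : K)⁻¹ • w i)
            + ((φ i x - ψ i x) * (φ i y - ψ i y)) • ((-(4 : K)⁻¹) • w i)
          = (2 : K)⁻¹ • ((φ i x * ψ i y) • w i)
            + (2 : K)⁻¹ • ((φ i y * ψ i x) • w i) := by
        intro i
        rw [smul_smul, smul_smul, smul_smul, smul_smul, ← add_smul, ← add_smul]
        congr 1
        field_simp
        ring
      rw [← Finset.sum_add_distrib, Finset.sum_congr rfl (fun i _ => key i),
        Finset.sum_add_distrib, ← Finset.smul_sum, ← Finset.smul_sum, ← hw x y, ← hw y x,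
        mul_comm y x, ← add_smul]
      have : (2 : K)⁻¹ + (2 : K)⁻¹ = 1 := by field_simp; ring
      rw [this, one_smul]
    calc sInf {m : ℕ | ∃ (Φ : Fin m → (A →ₗ[K] K)) (v : Fin m → A),
          ∀ x y : A, x * y = ∑ i, (Φ i x * Φ i y) • v i} ≤ n + n := Nat.sInf_le hmem
      _ = 2 * n := (two_mul n).symm
  · have he : {n : ℕ | ∃ (φ : Fin n → (A →ₗ[K] K)) (w : Fin n → A),
        ∀ x y : A, x * y = ∑ i, (φ i x * φ i y) • w i} = ∅ := by
      rw [Set.eq_empty_iff_forall_notMem]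
      rintro m ⟨φ, w, hw⟩
      exact hne ⟨m, φ, φ, w, hw⟩
    rw [he, Nat.sInf_empty]
    exact Nat.zero_le _
end

section
/- Let K be a field and A a finite-dimensional K-algebra with no zero-divisors (i.e., for nonzero x,y ∈ A one has xy ≠ 0). Then μ(A/K) ≥ 2·dim_K A − 1. -/
open Finset

/-- If the finite-dimensional `K`-algebra `A` has no zero-divisor,
then `μ(A/K) ≥ 2 dim_K A - 1`. -/
theorem stmt_3 (K A : Type*) [Field K] [Ring A] [Algebra K A] [FiniteDimensional K A]
    (h : ∀ x y : A, x ≠ 0 → y ≠ 0 → x * y ≠ 0) :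
    2 * Module.finrank K A - 1 ≤ mu K A := by
  classical
  set d := Module.finrank K A with hd
  rcases Nat.eq_zero_or_pos d with hd0 | hd1
  · simp [hd0]
  have hdpos : 0 < d := hd1
  haveI : Nontrivial A := Module.nontrivial_of_finrank_pos hdpos
  apply le_csInf
  · -- nonemptiness: n = d * d works
    refine ⟨d * d, ?_⟩
    set b := Module.finBasis K A with hb
    refine ⟨fun k => b.coord (finProdFinEquiv.symm k).1,
      fun k => b.coord (finProdFinEquiv.symm k).2,
      fun k => b ((finProdFinEquiv.symm k).1) * b ((finProdFinEquiv.symm k).2), ?_⟩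
    intro x y
    have hre : (∑ k : Fin (d * d),
        (b.coord (finProdFinEquiv.symm k).1 x * b.coord (finProdFinEquiv.symm k).2 y) •
          (b (finProdFinEquiv.symm k).1 * b (finProdFinEquiv.symm k).2)) =
        ∑ p : Fin d × Fin d, (b.coord p.1 x * b.coord p.2 y) • (b p.1 * b p.2) :=
      Fintype.sum_bijective finProdFinEquiv.symm finProdFinEquiv.symm.bijective _ _
        (fun k => rfl)
    rw [hre]
    conv_lhs => rw [← b.sum_repr x, ← b.sum_repr y]
    rw [Finset.sum_mul_sum, Fintype.sum_prod_type]
    simp [Module.Basis.coord_apply, smul_mul_assoc, mul_smul_comm, smul_smul, mul_comm]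
    rfl
  · rintro n ⟨φ, ψ, w, hw⟩
    obtain ⟨s, -, hs⟩ := Finset.exists_subset_card_eq
      (show min n (d - 1) ≤ (Finset.univ : Finset (Fin n)).card by simp [min_le_left])
    set L : A →ₗ[K] (s → K) := LinearMap.pi (fun i : s => ψ i) with hL
    have hnotinj : ¬ Function.Injective L := by
      intro hinj
      have := LinearMap.finrank_le_finrank_of_injective hinj
      rw [Module.finrank_pi, Fintype.card_coe, hs] at this
      omega
    rw [← LinearMap.ker_eq_bot] at hnotinj
    obtain ⟨y, hyk, hy0⟩ := Submodule.ne_bot_iff _ |>.mp hnotinj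
    have hpsi : ∀ i ∈ s, ψ i y = 0 := by
      intro i hi
      have := congrFun (LinearMap.mem_ker.mp hyk) ⟨i, hi⟩
      simpa [hL] using this
    set W : Submodule K A := Submodule.span K ↑(sᶜ.image w) with hW
    have hmem : ∀ x : A, x * y ∈ W := by
      intro x
      rw [hw x y, ← Finset.sum_add_sum_compl s]
      have h1 : ∑ i ∈ s, (φ i x * ψ i y) • w i = 0 := by
        apply Finset.sum_eq_zero
        intro i hi
        rw [hpsi i hi, mul_zero, zero_smul]
      rw [h1, zero_add]
      exact Submodule.sum_smul_mem _ _ (fun i hi =>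
        Submodule.subset_span (Finset.mem_coe.mpr (Finset.mem_image_of_mem w hi)))
    set f : A →ₗ[K] W := LinearMap.codRestrict W (LinearMap.mulRight K y) hmem with hf
    have hfinj : Function.Injective f := by
      intro a b hab
      have hab' : a * y = b * y := by
        have := congrArg Subtype.val hab
        exact this
      by_contra hne
      have : (a - b) * y = 0 := by rw [sub_mul, hab', sub_self]
      exact h (a - b) y (sub_ne_zero.mpr hne) hy0 this
    have hdle : d ≤ Module.finrank K W := by
      simpa [hd] using LinearMap.finrank_le_finrank_of_injective hfinj
    have hWle : Module.finrank K W ≤ sᶜ.card :=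
      (finrank_span_finset_le_card _).trans (Finset.card_image_le)
    have hcompl : sᶜ.card = n - min n (d - 1) := by
      rw [Finset.card_compl, hs, Fintype.card_fin]
    omega
end

section
/- Let K ⊆ L be a finite field extension and A a finite-dimensional L-algebra; then A is also a finite-dimensional K-algebra, and μ(A/K) ≤ μ(A/L)·μ(L/K). -/
open Finset

lemma mu_set_nonempty (K A : Type*) [Field K] [Ring A] [Algebra K A]
    [FiniteDimensional K A] :
    {n : ℕ | ∃ (φ ψ : Fin n → (A →ₗ[K] K)) (w : Fin n → A),
      ∀ x y : A, x * y = ∑ i, (φ i x * ψ i y) • w i}.Nonempty := by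
  set d := Module.finrank K A with hd
  set b := Module.finBasis K A with hb
  refine ⟨d * d, fun k => b.coord (finProdFinEquiv.symm k).1,
          fun k => b.coord (finProdFinEquiv.symm k).2,
          fun k => b (finProdFinEquiv.symm k).1 * b (finProdFinEquiv.symm k).2, ?_⟩
  intro x y
  have key : x * y = ∑ p : Fin d × Fin d,
      (b.coord p.1 x * b.coord p.2 y) • (b p.1 * b p.2) := by
    rw [Fintype.sum_prod_type]
    conv_lhs => rw [← b.sum_repr x, ← b.sum_repr y]
    rw [Finset.sum_mul_sum]
    refine Finset.sum_congr rfl fun i _ => Finset.sum_congr rfl fun j _ => ?_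
    rw [smul_mul_smul_comm]
    rfl
  rw [key]
  exact (Equiv.sum_comp finProdFinEquiv.symm
    (fun p : Fin d × Fin d => (b.coord p.1 x * b.coord p.2 y) • (b p.1 * b p.2))).symm

/-- If `K ⊆ L` is a finite field extension and `A` a finite-dimensional `L`-algebra,
then `μ(A/K) ≤ μ(A/L) · μ(L/K)`. -/
theorem stmt_5 (K L A : Type*) [Field K] [Field L] [Algebra K L] [FiniteDimensional K L]
    [Ring A] [Algebra L A] [Algebra K A] [IsScalarTower K L A] [FiniteDimensional L A] :
    mu K A ≤ mu L A * mu K L := by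
  obtain ⟨φ, ψ, w, hw⟩ := Nat.sInf_mem (mu_set_nonempty L A)
  obtain ⟨α, β, v, hv⟩ := Nat.sInf_mem (mu_set_nonempty K L)
  apply Nat.sInf_le
  refine ⟨fun k => (α (finProdFinEquiv.symm k).2).comp
            ((φ (finProdFinEquiv.symm k).1).restrictScalars K),
          fun k => (β (finProdFinEquiv.symm k).2).comp
            ((ψ (finProdFinEquiv.symm k).1).restrictScalars K),
          fun k => v (finProdFinEquiv.symm k).2 • w (finProdFinEquiv.symm k).1, ?_⟩
  intro x y
  have key : x * y = ∑ p : Fin (mu L A) × Fin (mu K L),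
      (α p.2 (φ p.1 x) * β p.2 (ψ p.1 y)) • (v p.2 • w p.1) := by
    rw [Fintype.sum_prod_type, hw x y]
    refine Finset.sum_congr rfl fun i _ => ?_
    rw [hv (φ i x) (ψ i y), Finset.sum_smul]
    refine Finset.sum_congr rfl fun j _ => ?_
    rw [smul_assoc]
  rw [key]
  exact (Equiv.sum_comp finProdFinEquiv.symm
    (fun p : Fin (mu L A) × Fin (mu K L) =>
      (α p.2 (φ p.1 x) * β p.2 (ψ p.1 y)) • (v p.2 • w p.1))).symm
end

section
/- There do not exist an integer n ≥ 0, elements w₁,…,wₙ ∈ 𝔽₄, and 𝔽₂-linear forms φ₁,…,φₙ : 𝔽₄ → 𝔽₂ such that for all x, y, z ∈ 𝔽₄ one has xyz = Σᵢ φᵢ(x)·φᵢ(y)·φᵢ(z)·wᵢ. In other words, the 𝔽₂-trilinear map 𝔽₄ × 𝔽₄ × 𝔽₄ → 𝔽₄, (x,y,z) ↦ xyz, admits no fully symmetric elementary decomposition. -/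
open Finset

/-- The `𝔽₂`-trilinear map `𝔽₄ × 𝔽₄ × 𝔽₄ → 𝔽₄`, `(x,y,z) ↦ xyz`, admits no fully
symmetric elementary decomposition: there are no `n`, `w₁,…,wₙ ∈ 𝔽₄` and `𝔽₂`-linear
forms `φ₁,…,φₙ : 𝔽₄ → 𝔽₂` with `xyz = ∑ i, φᵢ(x)φᵢ(y)φᵢ(z)·wᵢ` for all `x,y,z`. -/
theorem stmt_9 :
    ¬ ∃ (n : ℕ) (w : Fin n → GaloisField 2 2)
        (φ : Fin n → (GaloisField 2 2 →ₗ[ZMod 2] ZMod 2)),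
      ∀ x y z : GaloisField 2 2,
        x * y * z = ∑ i, (φ i x * φ i y * φ i z) • w i := by
  haveI : Fact (Nat.Prime 2) := ⟨Nat.prime_two⟩
  rintro ⟨n, w, φ, h⟩
  haveI : Fintype (GaloisField 2 2) := Fintype.ofFinite _
  haveI : DecidableEq (GaloisField 2 2) := Classical.decEq _
  have hcard : Fintype.card (GaloisField 2 2) = 4 := by
    have := GaloisField.card 2 2 (by norm_num)
    simpa using this
  -- cube of a nonzero element is 1
  have hc : ∀ x : GaloisField 2 2, x ≠ 0 → x * x * x = 1 := by
    intro x hx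
    have h3 := FiniteField.pow_card_sub_one_eq_one x hx
    rw [hcard] at h3
    calc x * x * x = x ^ (4 - 1) := by ring
      _ = 1 := h3
  -- the cube map is additive
  have hadd : ∀ x y : GaloisField 2 2,
      (x + y) * (x + y) * (x + y) = x * x * x + y * y * y := by
    intro x y
    rw [h, h, h, ← Finset.sum_add_distrib]
    apply Finset.sum_congr rfl
    intro i _
    have key : ∀ a b : ZMod 2, (a + b) * (a + b) * (a + b) = a * a * a + b * b * b := by
      intro a b; fin_cases a <;> fin_cases b <;> rfl
    rw [map_add, key, add_smul]
  -- pick g ≠ 0, 1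
  obtain ⟨g, hg0, hg1⟩ : ∃ g : GaloisField 2 2, g ≠ 0 ∧ g ≠ 1 := by
    by_contra hcon
    push_neg at hcon
    have hsub : (Finset.univ : Finset (GaloisField 2 2)) ⊆ {0, 1} := by
      intro x _
      rcases eq_or_ne x 0 with h0 | h0
      · simp [h0]
      · simp [hcon x h0]
    have := Finset.card_le_card hsub
    have h2 : ({0, 1} : Finset (GaloisField 2 2)).card ≤ 2 :=
      Finset.card_insert_le _ _ |>.trans (by simp)
    rw [Finset.card_univ, hcard] at this
    omega
  have h1g : (1 : GaloisField 2 2) + g ≠ 0 := by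
    intro hh
    apply hg1
    have : g = -1 := by linear_combination hh
    rw [this, CharTwo.neg_eq]
  have key := hadd 1 g
  rw [hc 1 one_ne_zero, hc g hg0, hc _ h1g] at key
  rw [CharTwo.add_self_eq_zero] at key
  exact one_ne_zero key
end

section
/- Let K be a field and A, A' two finite-dimensional K-algebras. Suppose there exists an interpolation system for A' by A: a K-algebra B equipped with K-algebra morphisms f : B → A and f' : B → A', and K-linear subspaces E₁, E₂ ⊆ B, such that (i) the restriction of f to the linear span E₁E₂ of the products e₁e₂ (e₁ ∈ E₁, e₂ ∈ E₂) is injective, and (ii) the restrictions of f' to E₁ and to E₂ are both surjective onto A'. Then μ(A'/K) ≤ μ(A/K). -/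
open Finset

/-- If there is an interpolation system for `A'` by `A` (a `K`-algebra `B` with
morphisms `f : B → A`, `f' : B → A'`, and subspaces `E₁, E₂ ⊆ B` such that `f` is
injective on the span `E₁E₂` of products, and `f'` maps both `E₁` and `E₂` onto `A'`),
then `μ(A'/K) ≤ μ(A/K)`. -/
theorem stmt_10 (K : Type*) [Field K] (A A' B : Type*) [Ring A] [Ring A'] [Ring B]
    [Algebra K A] [Algebra K A'] [Algebra K B]
    [FiniteDimensional K A] [FiniteDimensional K A']
    (f : B →ₐ[K] A) (f' : B →ₐ[K] A') (E₁ E₂ : Submodule K B)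
    (hinj : Set.InjOn f ((E₁ * E₂ : Submodule K B) : Set B))
    (hsurj₁ : ∀ a : A', ∃ e ∈ E₁, f' e = a)
    (hsurj₂ : ∀ a : A', ∃ e ∈ E₂, f' e = a) :
    mu K A' ≤ mu K A := by
  -- optimal algorithm for A
  have hmem : mu K A ∈ {n : ℕ | ∃ (φ ψ : Fin n → (A →ₗ[K] K)) (w : Fin n → A),
      ∀ x y : A, x * y = ∑ i, (φ i x * ψ i y) • w i} :=
    Nat.sInf_mem (mu_set_nonempty K A)
  obtain ⟨φ, ψ, w, h⟩ := hmem
  -- sections of f' on E₁ and E₂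
  let F₁ : E₁ →ₗ[K] A' := f'.toLinearMap ∘ₗ E₁.subtype
  let F₂ : E₂ →ₗ[K] A' := f'.toLinearMap ∘ₗ E₂.subtype
  have hF₁ : LinearMap.range F₁ = ⊤ := LinearMap.range_eq_top.mpr (fun a => by
    obtain ⟨e, he, hfe⟩ := hsurj₁ a; exact ⟨⟨e, he⟩, hfe⟩)
  have hF₂ : LinearMap.range F₂ = ⊤ := LinearMap.range_eq_top.mpr (fun a => by
    obtain ⟨e, he, hfe⟩ := hsurj₂ a; exact ⟨⟨e, he⟩, hfe⟩)
  obtain ⟨σ₁, hσ₁⟩ := F₁.exists_rightInverse_of_surjective hF₁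
  obtain ⟨σ₂, hσ₂⟩ := F₂.exists_rightInverse_of_surjective hF₂
  -- the retraction g : A → A'
  set V : Submodule K B := E₁ * E₂ with hV
  let fV : V →ₗ[K] A := f.toLinearMap ∘ₗ V.subtype
  have hfV : Function.Injective fV := fun u v huv => Subtype.ext (hinj u.2 v.2 huv)
  let e : V ≃ₗ[K] LinearMap.range fV := LinearEquiv.ofInjective fV hfV
  obtain ⟨W', hW'⟩ := Submodule.exists_isCompl (LinearMap.range fV)
  let proj : A →ₗ[K] LinearMap.range fV := (LinearMap.range fV).linearProjOfIsCompl W' hW'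
  let g : A →ₗ[K] A' := (f'.toLinearMap ∘ₗ V.subtype ∘ₗ e.symm.toLinearMap) ∘ₗ proj
  have hg : ∀ v : V, g (f v) = f' v := by
    intro v
    have h1 : f (v : B) = ((⟨fV v, LinearMap.mem_range_self fV v⟩ : LinearMap.range fV) : A) := rfl
    have h2 : proj (f (v : B)) = ⟨fV v, LinearMap.mem_range_self fV v⟩ := by
      rw [h1]; exact Submodule.linearProjOfIsCompl_apply_left hW' _
    have h3 : (⟨fV v, LinearMap.mem_range_self fV v⟩ : LinearMap.range fV) = e v :=
      Subtype.ext (LinearEquiv.ofInjective_apply fV v).symm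
    simp only [g, LinearMap.comp_apply, h2, h3, LinearEquiv.coe_coe, e.symm_apply_apply]
    rfl
  -- assemble the algorithm for A'
  have : mu K A ∈ {m : ℕ | ∃ (φ' ψ' : Fin m → (A' →ₗ[K] K)) (w' : Fin m → A'),
      ∀ x y : A', x * y = ∑ i, (φ' i x * ψ' i y) • w' i} := by
    refine ⟨fun i => φ i ∘ₗ f.toLinearMap ∘ₗ E₁.subtype ∘ₗ σ₁,
      fun i => ψ i ∘ₗ f.toLinearMap ∘ₗ E₂.subtype ∘ₗ σ₂,
      fun i => g (w i), fun x y => ?_⟩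
    have hx : f' ((σ₁ x : E₁) : B) = x := congrArg (· x) (congrArg DFunLike.coe hσ₁)
    have hy : f' ((σ₂ y : E₂) : B) = y := congrArg (· y) (congrArg DFunLike.coe hσ₂)
    have hmemV : ((σ₁ x : E₁) : B) * ((σ₂ y : E₂) : B) ∈ V :=
      Submodule.mul_mem_mul (σ₁ x).2 (σ₂ y).2
    have step1 : x * y = f' (((σ₁ x : E₁) : B) * ((σ₂ y : E₂) : B)) := by
      rw [map_mul, hx, hy]
    have step2 : f' (((σ₁ x : E₁) : B) * ((σ₂ y : E₂) : B)) =
        g (f (((σ₁ x : E₁) : B) * ((σ₂ y : E₂) : B))) := (hg ⟨_, hmemV⟩).symm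
    rw [step1, step2, map_mul, h]
    rw [map_sum]
    refine Finset.sum_congr rfl fun i _ => ?_
    rw [LinearMap.map_smul]
    simp only [LinearMap.comp_apply, AlgHom.toLinearMap_apply, Submodule.coe_subtype]
  exact Nat.sInf_le this
end

section
/- Let q be a prime power and m, l ≥ 1 integers with ml ≤ q/2 + 1. Then μ_q(m,l) ≤ μ^sym_q(m,l) ≤ 2ml − 1. -/
open Finset

/-- The truncated polynomial algebra `L[t]/(t^l)`. -/
abbrev TruncAlg (L : Type*) [CommRing L] (l : ℕ) : Type _ :=
  Polynomial L ⧸ Ideal.span {(Polynomial.X : Polynomial L) ^ l}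

section Auxiliary

open Polynomial


lemma muSym_aux {K A : Type*} [Field K] [CommRing A] [Algebra K A]
    (n d : ℕ) (hnd : n + n = d + 2)
    (b : Module.Basis (Fin n) K A) (θ : A) (hb : ∀ i : Fin n, b i = θ ^ (i : ℕ))
    (a : Fin d → K) (ha : Function.Injective a) :
    ∃ (φ : Fin (d + 1) → (A →ₗ[K] K)) (w : Fin (d + 1) → A),
      ∀ x y : A, x * y = ∑ i, (φ i x * φ i y) • w i := by
  classical
  have hn : 1 ≤ n := by omega
  set ε : A →ₗ[K] K[X] := b.constr K (fun i : Fin n => (X : K[X]) ^ (i : ℕ)) with hε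
  have hπε : ∀ x : A, aeval θ (ε x) = x := by
    intro x
    have h1 : ((aeval θ : K[X] →ₐ[K] A).toLinearMap.comp ε) = LinearMap.id := by
      apply b.ext
      intro i
      show aeval θ (ε (b i)) = b i
      rw [hε, b.constr_basis, map_pow, aeval_X, hb]
    calc aeval θ (ε x) = ((aeval θ : K[X] →ₐ[K] A).toLinearMap.comp ε) x := rfl
    _ = x := by rw [h1]; rfl
  have hmem : ∀ x : A, ε x ∈ degreeLT K n := by
    intro x
    rw [hε, b.constr_apply_fintype K]
    apply Submodule.sum_mem
    intro i _
    apply Submodule.smul_mem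
    rw [Polynomial.mem_degreeLT, degree_X_pow]
    exact_mod_cast i.isLt
  have hcz : ∀ (x : A) (j : ℕ), n ≤ j → (ε x).coeff j = 0 := by
    intro x j hj
    apply coeff_eq_zero_of_degree_lt
    exact lt_of_lt_of_le (Polynomial.mem_degreeLT.mp (hmem x)) (by exact_mod_cast hj)
  have hmul : ∀ x y : A, ε x * ε y ∈ degreeLT K (d + 1) := by
    intro x y
    rw [Polynomial.mem_degreeLT, degree_lt_iff_coeff_zero]
    intro j hj
    have hj' : d + 1 ≤ j := by exact_mod_cast hj
    rw [coeff_mul]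
    apply Finset.sum_eq_zero
    rintro ⟨u, v⟩ huv
    rw [Finset.HasAntidiagonal.mem_antidiagonal] at huv
    rcases (by omega : n ≤ u ∨ n ≤ v) with h | h
    · rw [hcz x u h, zero_mul]
    · rw [hcz y v h, mul_zero]
  have htop : ∀ x y : A, (ε x * ε y).coeff d = (ε x).coeff (n - 1) * (ε y).coeff (n - 1) := by
    intro x y
    rw [coeff_mul]
    rw [Finset.sum_eq_single ((n - 1, n - 1) : ℕ × ℕ)]
    · rintro ⟨u, v⟩ huv hne
      rw [Finset.HasAntidiagonal.mem_antidiagonal] at huv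
      have hne' : u ≠ n - 1 ∨ v ≠ n - 1 := by
        by_contra hcon
        push_neg at hcon
        exact hne (by rw [hcon.1, hcon.2])
      rcases (by omega : n ≤ u ∨ n ≤ v) with h | h
      · rw [hcz x u h, zero_mul]
      · rw [hcz y v h, mul_zero]
    · intro hnotmem
      exact absurd (Finset.HasAntidiagonal.mem_antidiagonal.mpr (by omega)) hnotmem
  set V := degreeLT K (d + 1) with hV
  haveI : FiniteDimensional K V := Module.Finite.equiv (degreeLTEquiv K (d + 1)).symm
  set T : V →ₗ[K] (Fin (d + 1) → K) := LinearMap.pi (fun k : Fin (d + 1) =>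
    if h : (k : ℕ) < d then (leval (a ⟨k, h⟩)).comp V.subtype
    else (lcoeff K d).comp V.subtype) with hT
  have hTapp : ∀ (P : V) (k : Fin (d + 1)), T P k =
      if h : (k : ℕ) < d then (P : K[X]).eval (a ⟨k, h⟩) else (P : K[X]).coeff d := by
    intro P k
    rw [hT, LinearMap.pi_apply]
    split_ifs with h <;> rfl
  have hTinj : Function.Injective T := by
    rw [← LinearMap.ker_eq_bot]
    apply LinearMap.ker_eq_bot'.mpr
    intro P hP
    have h1 : (P : K[X]).coeff d = 0 := by
      have h2 := congrFun hP (Fin.last d)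
      rw [hTapp] at h2
      rw [dif_neg (by simp)] at h2
      exact h2
    have h2 : ∀ j : Fin d, (P : K[X]).eval (a j) = 0 := by
      intro j
      have h3 := congrFun hP (⟨(j : ℕ), by omega⟩ : Fin (d + 1))
      rw [hTapp] at h3
      rw [dif_pos j.isLt] at h3
      convert h3 using 2
      rfl
    have hP0 : (P : K[X]) = 0 := by
      rcases eq_or_ne (P : K[X]) 0 with h0 | h0
      · exact h0
      · have hPdeg : (P : K[X]).degree < ((d + 1 : ℕ) : WithBot ℕ) :=
          Polynomial.mem_degreeLT.mp P.2
        have hle : (P : K[X]).natDegree < d + 1 := (natDegree_lt_iff_degree_lt h0).mpr hPdeg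
        have hne : (P : K[X]).natDegree ≠ d := by
          intro hEq
          apply h0
          rw [← leadingCoeff_eq_zero, leadingCoeff, hEq]
          exact h1
        exact Polynomial.eq_zero_of_natDegree_lt_card_of_eval_eq_zero (P : K[X]) ha h2
          (by simpa using (by omega : (P : K[X]).natDegree < d))
    exact Subtype.ext (by simpa using hP0)
  have hfr : Module.finrank K V = Module.finrank K (Fin (d + 1) → K) := by
    rw [(degreeLTEquiv K (d + 1)).finrank_eq]
  set E := T.linearEquivOfInjective hTinj hfr with hE
  refine ⟨fun k => if h : (k : ℕ) < d then (leval (a ⟨k, h⟩)).comp ε else (lcoeff K (n - 1)).comp ε,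
    fun k => aeval θ ((E.symm (fun j => if k = j then (1 : K) else 0) : V) : K[X]), ?_⟩
  intro x y
  set P : V := ⟨ε x * ε y, hmul x y⟩ with hPdef
  set c : Fin (d + 1) → K := T P with hc
  have hdecomp : P = ∑ k, c k • E.symm (fun j => if k = j then (1 : K) else 0) := by
    have h1 : T P = ∑ k, c k • (fun j => if k = j then (1 : K) else 0) := pi_eq_sum_univ (T P)
    calc P = E.symm (E P) := (E.symm_apply_apply P).symm
    _ = E.symm (T P) := rfl
    _ = E.symm (∑ k, c k • (fun j => if k = j then (1 : K) else 0)) := by rw [← h1]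
    _ = _ := by rw [map_sum]; simp_rw [map_smul]
  have hcoe : (P : K[X]) = ∑ k, c k • ((E.symm (fun j => if k = j then (1 : K) else 0) : V) : K[X]) := by
    calc (P : K[X]) = V.subtype P := rfl
    _ = V.subtype (∑ k, c k • E.symm (fun j => if k = j then (1 : K) else 0)) := by rw [← hdecomp]
    _ = _ := by rw [map_sum]; simp_rw [map_smul]; rfl
  calc x * y = aeval θ (ε x * ε y) := by rw [map_mul, hπε, hπε]
  _ = aeval θ (P : K[X]) := rfl
  _ = ∑ k, c k • aeval θ ((E.symm (fun j => if k = j then (1 : K) else 0) : V) : K[X]) := by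
      rw [hcoe, map_sum]; simp_rw [map_smul]
  _ = _ := by
      apply Finset.sum_congr rfl
      intro k _
      congr 1
      rw [hc, hTapp]
      split_ifs with h
      · show (ε x * ε y).eval _ = _
        rw [eval_mul]
        simp [dif_pos h]
      · show (ε x * ε y).coeff d = _
        rw [htop x y]
        simp [dif_neg h]


lemma pow_minpoly_dvd_aux {K L : Type*} [Field K] [Field L] [Algebra K L] (α : L)
    (hsep : ((minpoly K α).map (algebraMap K L)).Separable) :
    ∀ (j : ℕ) (g : Polynomial K),
      ((X : Polynomial L) - C α) ^ j ∣ g.map (algebraMap K L) → (minpoly K α) ^ j ∣ g := by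
  intro j
  induction j with
  | zero => intro g _; simpa using one_dvd g
  | succ j ih =>
    intro g hdvd
    have h1 : (X - C α) ∣ g.map (algebraMap K L) :=
      (dvd_pow_self _ (Nat.succ_ne_zero j)).trans hdvd
    have hroot : aeval α g = 0 := by
      rw [aeval_def, ← eval_map]
      exact dvd_iff_isRoot.mp h1
    obtain ⟨c, hc⟩ := minpoly.dvd K α hroot
    obtain ⟨u, hu⟩ : (X - C α) ∣ (minpoly K α).map (algebraMap K L) := by
      apply dvd_iff_isRoot.mpr
      show eval α _ = 0
      rw [eval_map, ← aeval_def, minpoly.aeval]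
    have hnu : ¬ (X - C α) ∣ u := by
      rintro ⟨v, hv⟩
      have hsq : (X - C α) * (X - C α) ∣ (minpoly K α).map (algebraMap K L) :=
        ⟨v, by rw [hu, hv]; ring⟩
      exact Polynomial.not_isUnit_X_sub_C α (hsep.squarefree _ hsq)
    rw [hc, Polynomial.map_mul, hu] at hdvd
    have h3 : (X - C α) ^ j ∣ u * c.map (algebraMap K L) := by
      have h4 : (X - C α) * (X - C α) ^ j ∣ (X - C α) * (u * c.map (algebraMap K L)) := by
        rw [← pow_succ']
        rwa [mul_assoc] at hdvd
      exact (mul_dvd_mul_iff_left (X_sub_C_ne_zero α)).mp h4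
    have h5 : (X - C α) ^ j ∣ c.map (algebraMap K L) :=
      (prime_X_sub_C α).pow_dvd_of_dvd_mul_left _ hnu h3
    have h6 := ih c h5
    rw [hc, pow_succ']
    exact mul_dvd_mul (dvd_refl _) h6

end Auxiliary

/-- If `q` is a prime power and `m, l ≥ 1` satisfy `ml ≤ q/2 + 1`, then, with `K = 𝔽_q`
and `L = 𝔽_{q^m}`: `μ_q(m,l) ≤ μ^sym_q(m,l) ≤ 2ml - 1`. -/
theorem stmt_15 (q m l : ℕ) (hq : IsPrimePow q) (hm : 1 ≤ m) (hl : 1 ≤ l)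
    (hml : (m * l : ℚ) ≤ (q : ℚ) / 2 + 1)
    (K L : Type*) [Field K] [Field L] [Algebra K L]
    (hK : Nat.card K = q) (hL : Nat.card L = q ^ m) :
    mu K (TruncAlg L l) ≤ muSym K (TruncAlg L l) ∧
    muSym K (TruncAlg L l) ≤ 2 * (m * l) - 1 := by
  classical
  open Polynomial in
  have hq2 : 2 ≤ q := hq.two_le
  haveI hKf : Finite K := Nat.finite_of_card_ne_zero (by omega)
  haveI hLf : Finite L := Nat.finite_of_card_ne_zero (by
    rw [hL]; exact pow_ne_zero m (by omega))
  haveI : FiniteDimensional K L := Module.Finite.of_finite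
  set n := m * l with hn
  have hn1 : 1 ≤ n := Nat.one_le_iff_ne_zero.mpr (by positivity)
  -- the dimension of L over K is m
  have hfrKL : Module.finrank K L = m := by
    haveI := Fintype.ofFinite K; haveI := Fintype.ofFinite L
    have h1 : Fintype.card L = Fintype.card K ^ Module.finrank K L := Module.card_eq_pow_finrank
    rw [← Nat.card_eq_fintype_card, ← Nat.card_eq_fintype_card, hK, hL] at h1
    exact Nat.pow_right_injective hq2 h1.symm
  -- the dimension of the truncated algebra over L is l
  have hfrLA : Module.finrank L (TruncAlg L l) = l := by
    have h := (AdjoinRoot.powerBasis' (Polynomial.monic_X_pow (R := L) l)).finrank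
    simp [AdjoinRoot.powerBasis'] at h
    exact h
  have hfrKA : Module.finrank K (TruncAlg L l) = n := by
    rw [← Module.finrank_mul_finrank K L (TruncAlg L l), hfrKL, hfrLA]
  -- primitive element
  obtain ⟨α, hα⟩ := Field.exists_primitive_element_of_finite_top K L
  have hint : IsIntegral K α := IsIntegral.of_finite K α
  have hfm : (minpoly K α).natDegree = m := by
    have h1 := IntermediateField.adjoin.finrank hint
    rw [hα, IntermediateField.finrank_top'] at h1
    rw [← h1, hfrKL]
  -- the generator θ
  set I : Ideal (Polynomial L) := Ideal.span {(X : L[X]) ^ l} with hI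
  set t : TruncAlg L l := Ideal.Quotient.mk I (X : L[X]) with ht
  set θ : TruncAlg L l := algebraMap L (TruncAlg L l) α + t with hθ
  have hmkC : ∀ z : L, Ideal.Quotient.mk I (C z) = algebraMap L (TruncAlg L l) z := by
    intro z
    rw [IsScalarTower.algebraMap_apply L L[X] (TruncAlg L l), Ideal.Quotient.algebraMap_eq,
      Polynomial.algebraMap_eq]
  have key : (aeval θ : K[X] →ₐ[K] TruncAlg L l) =
      ((Ideal.Quotient.mkₐ K I).comp
        (((aeval (X + C α) : L[X] →ₐ[L] L[X]).restrictScalars K).comp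
          (mapAlgHom (Algebra.ofId K L)))) := by
    apply Polynomial.algHom_ext
    rw [aeval_X, AlgHom.comp_apply, AlgHom.comp_apply, coe_mapAlgHom]
    rw [Polynomial.map_X]
    rw [AlgHom.coe_restrictScalars', aeval_X, Ideal.Quotient.mkₐ_eq_mk, map_add, hmkC, hθ, ht,
      add_comm]
  have hFa : ∀ g : K[X], aeval θ g =
      Ideal.Quotient.mk I (taylor α (g.map (algebraMap K L))) := by
    intro g
    rw [key]
    rw [AlgHom.comp_apply, AlgHom.comp_apply, coe_mapAlgHom, AlgHom.coe_restrictScalars',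
      Ideal.Quotient.mkₐ_eq_mk, taylor_apply, comp_eq_aeval]
    congr 2
  -- separability of the minimal polynomial
  have hsep : ((minpoly K α).map (algebraMap K L)).Separable :=
    (PerfectField.separable_of_irreducible (minpoly.irreducible hint)).map
  -- linear independence of powers of θ
  have hli : LinearIndependent K (fun i : Fin n => θ ^ (i : ℕ)) := by
    rw [Fintype.linearIndependent_iff]
    intro c hc
    set g : K[X] := ∑ i : Fin n, C (c i) * X ^ (i : ℕ) with hg
    have hag : aeval θ g = 0 := by
      rw [hg, map_sum, ← hc]
      apply Finset.sum_congr rfl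
      intro i _
      rw [map_mul, aeval_C, map_pow, aeval_X]
      exact (Algebra.smul_def _ _).symm
    have hgdeg : g.natDegree < n := by
      apply lt_of_le_of_lt (Polynomial.natDegree_sum_le_of_forall_le _ _
        (fun i _ => (Polynomial.natDegree_C_mul_X_pow_le (c i) (i : ℕ)).trans
          (Nat.le_pred_of_lt i.isLt)))
      exact Nat.sub_lt hn1 Nat.one_pos
    have hg0 : g = 0 := by
      by_contra hg0
      rw [hFa, Ideal.Quotient.eq_zero_iff_mem, hI, Ideal.mem_span_singleton] at hag
      have hXl : ((X : L[X]) - C α) ^ l ∣ g.map (algebraMap K L) := by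
        obtain ⟨r, hr⟩ := hag
        refine ⟨taylor (-α) r, ?_⟩
        have h2 := congrArg (⇑(taylor (-α))) hr
        rw [taylor_taylor, neg_add_cancel, taylor_zero, taylor_mul] at h2
        rw [h2]
        congr 1
        rw [taylor_apply, Polynomial.pow_comp, Polynomial.X_comp]
        rw [map_neg, ← sub_eq_add_neg]
      have hdvd : (minpoly K α) ^ l ∣ g := pow_minpoly_dvd_aux α hsep l g hXl
      have hdeg2 : ((minpoly K α) ^ l).natDegree ≤ g.natDegree :=
        Polynomial.natDegree_le_of_dvd hdvd hg0
      rw [Polynomial.natDegree_pow, hfm, mul_comm] at hdeg2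
      rw [hn] at hgdeg
      exact absurd hgdeg (not_lt.mpr hdeg2)
    intro i
    have hcoeff : g.coeff (i : ℕ) = c i := by
      rw [hg, Polynomial.finset_sum_coeff]
      rw [Finset.sum_eq_single i]
      · rw [Polynomial.coeff_C_mul, Polynomial.coeff_X_pow, if_pos rfl, mul_one]
      · intro j _ hji
        rw [Polynomial.coeff_C_mul, Polynomial.coeff_X_pow,
          if_neg (fun h => hji (Fin.ext (by omega))), mul_zero]
      · intro h
        exact absurd (Finset.mem_univ i) h
    rw [← hcoeff, hg0, Polynomial.coeff_zero]
  -- the basis of powers of θ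
  have hbcard : Fintype.card (Fin n) = Module.finrank K (TruncAlg L l) := by
    rw [Fintype.card_fin, hfrKA]
  haveI : Nonempty (Fin n) := ⟨⟨0, by omega⟩⟩
  set b := basisOfLinearIndependentOfCardEqFinrank hli hbcard with hb
  have hbi : ∀ i : Fin n, b i = θ ^ (i : ℕ) := by
    intro i
    rw [hb, coe_basisOfLinearIndependentOfCardEqFinrank]
  -- the evaluation points
  have hdq : 2 * n - 2 ≤ q := by
    have h2 : (2 * (m * l) : ℚ) ≤ (q : ℚ) + 2 := by linarith
    have h3 : 2 * (m * l) ≤ q + 2 := by exact_mod_cast h2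
    omega
  haveI := Fintype.ofFinite K
  have hcardK : Fintype.card K = q := by rw [← Nat.card_eq_fintype_card, hK]
  set e : K ≃ Fin q := Fintype.equivFinOfCardEq hcardK with he
  set a : Fin (2 * n - 2) → K := fun i => e.symm (Fin.castLE hdq i) with haDef
  have ha : Function.Injective a :=
    e.symm.injective.comp (Fin.castLE_injective hdq)
  obtain ⟨φ, w, hφw⟩ := muSym_aux n (2 * n - 2) (by omega) b θ hbi a ha
  have hmem : (2 * n - 2 + 1) ∈ {N : ℕ | ∃ (φ : Fin N → (TruncAlg L l →ₗ[K] K))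
      (w : Fin N → TruncAlg L l), ∀ x y : TruncAlg L l,
        x * y = ∑ i, (φ i x * φ i y) • w i} := ⟨φ, w, hφw⟩
  constructor
  · -- mu ≤ muSym
    have hne : {N : ℕ | ∃ (φ : Fin N → (TruncAlg L l →ₗ[K] K))
        (w : Fin N → TruncAlg L l), ∀ x y : TruncAlg L l,
          x * y = ∑ i, (φ i x * φ i y) • w i}.Nonempty := ⟨_, hmem⟩
    obtain ⟨φ', w', h'⟩ := Nat.sInf_mem hne
    exact Nat.sInf_le ⟨φ', φ', w', h'⟩
  · -- muSym ≤ 2ml - 1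
    have heq : 2 * (m * l) - 1 = 2 * n - 2 + 1 := by omega
    rw [heq]
    exact Nat.sInf_le hmem
end
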